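/- For b > 0 and a ∈ ℝ, the curve γ(t) = (a + t/(b(1+t²)), 1/(b(1+t²))) satisfies the magnetic Euler-Lagrange equations: (d/dt)(γ₁'(t)/γ₂(t)² + 1/γ₂(t)) = 0 and (d/dt)(γ₂'(t)/γ₂(t)²) = −(γ₁'(t)² + γ₂'(t)²)/γ₂(t)³ − γ₁'(t)/γ₂(t)² for all t ∈ ℝ. -/

import Mathlib

lemma denom_ne (b t : ℝ) (hb : 0 < b) : b * (1 + t ^ 2) ≠ 0 := by
  positivity

lemma hd1 (a b : ℝ) (hb : 0 < b) (t : ℝ) :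
    HasDerivAt (fun r : ℝ => a + r / (b * (1 + r ^ 2)))
      ((1 - t ^ 2) / (b * (1 + t ^ 2) ^ 2)) t := by
  have h : HasDerivAt (fun r : ℝ => b * (1 + r ^ 2)) (b * (2 * t)) t := by
    have := ((hasDerivAt_pow 2 t).const_add 1).const_mul b
    simpa using this
  have hq := (hasDerivAt_id t).div h (denom_ne b t hb)
  have := hq.const_add a
  convert this using 1
  · rfl
  · rfl
  · rfl
  have hb0 : b ≠ 0 := hb.ne'
  have ht0 : (1 + t ^ 2) ≠ 0 := by positivity
  field_simp
  simp only [id]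
  ring

lemma hd2 (b : ℝ) (hb : 0 < b) (t : ℝ) :
    HasDerivAt (fun r : ℝ => (1 : ℝ) / (b * (1 + r ^ 2)))
      (-(2 * b * t) / (b * (1 + t ^ 2)) ^ 2) t := by
  have h : HasDerivAt (fun r : ℝ => b * (1 + r ^ 2)) (b * (2 * t)) t := by
    have := ((hasDerivAt_pow 2 t).const_add 1).const_mul b
    simpa using this
  have := (hasDerivAt_const t (1 : ℝ)).div h (denom_ne b t hb)
  convert this using 1
  · rfl
  · rfl
  · rfl
  have hb0 : b ≠ 0 := hb.ne'
  have ht0 : (1 + t ^ 2) ≠ 0 := by positivity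
  field_simp
  ring

lemma deriv1 (a b : ℝ) (hb : 0 < b) (t : ℝ) :
    deriv (fun r : ℝ => a + r / (b * (1 + r ^ 2))) t
      = (1 - t ^ 2) / (b * (1 + t ^ 2) ^ 2) := (hd1 a b hb t).deriv

lemma deriv2 (b : ℝ) (hb : 0 < b) (t : ℝ) :
    deriv (fun r : ℝ => (1 : ℝ) / (b * (1 + r ^ 2))) t
      = -(2 * b * t) / (b * (1 + t ^ 2)) ^ 2 := (hd2 b hb t).deriv

/-- The horosphere parametrization satisfies the magnetic Euler-Lagrange
equations. -/
theorem horosphere_satisfies_EL (a b : ℝ) (hb : 0 < b) :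
    ∀ t : ℝ,
      (deriv (fun s =>
        (deriv (fun r => a + r / (b * (1 + r ^ 2))) s) /
          ((1 : ℝ) / (b * (1 + s ^ 2))) ^ 2 +
        1 / ((1 : ℝ) / (b * (1 + s ^ 2)))) t = 0) ∧
      (deriv (fun s =>
        (deriv (fun r => (1 : ℝ) / (b * (1 + r ^ 2))) s) /
          ((1 : ℝ) / (b * (1 + s ^ 2))) ^ 2) t =
        -(((deriv (fun r => a + r / (b * (1 + r ^ 2))) t) ^ 2 +
            (deriv (fun r => (1 : ℝ) / (b * (1 + r ^ 2))) t) ^ 2) /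
          ((1 : ℝ) / (b * (1 + t ^ 2))) ^ 3) -
        (deriv (fun r => a + r / (b * (1 + r ^ 2))) t) /
          ((1 : ℝ) / (b * (1 + t ^ 2))) ^ 2) := by
  intro t
  have hne : ∀ s : ℝ, b * (1 + s ^ 2) ≠ 0 := fun s => denom_ne b s hb
  constructor
  · have hfun : (fun s : ℝ =>
        (deriv (fun r => a + r / (b * (1 + r ^ 2))) s) /
          ((1 : ℝ) / (b * (1 + s ^ 2))) ^ 2 +
        1 / ((1 : ℝ) / (b * (1 + s ^ 2)))) = fun _ : ℝ => 2 * b := by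
      funext s
      rw [deriv1 a b hb s]
      have hs := hne s
      field_simp
      ring
    rw [hfun, deriv_const]
  · have hfun : (fun s : ℝ =>
        (deriv (fun r => (1 : ℝ) / (b * (1 + r ^ 2))) s) /
          ((1 : ℝ) / (b * (1 + s ^ 2))) ^ 2) = fun s : ℝ => -(2 * b) * s := by
      funext s
      rw [deriv2 b hb s]
      have hs := hne s
      field_simp
    rw [hfun, deriv1 a b hb t, deriv2 b hb t]
    have ht := hne t
    have : deriv (fun s : ℝ => -(2 * b) * s) t = -(2 * b) := by
      simpa using ((hasDerivAt_id t).const_mul (-(2 * b))).deriv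
    rw [this]
    field_simp
    ring
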